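/- Let (Ω, ℱ, P) be a probability space, μ = λ ⊗ P the product of Lebesgue measure on [0,1] with P, and U ⊂ ℝ a nonempty compact set. Let f : [0,1] × ℝ × ℝ × U → ℝ be measurable with |f| ≤ K everywhere and |f(t,x,y,u) − f(t,x',y',u)| ≤ L(|x−x'| + |y−y'|) for all t, u and all (x,y), (x',y'). Let x, y, x', y' : [0,1] × Ω → ℝ be measurable, let u, u' : [0,1] × Ω → U be measurable, and let 1 < τ < 2. Then there exists a constant C, depending only on τ, K and L, such that ∫ |f(t, x, y, u) − f(t, x', y', u')|^τ dμ ≤ C·[ d(u,u')^{1 − τ/2} + ∫ (|x − x'| + |y − y'|)^τ dμ ], where d(u,u') = μ({(t,ω) : u(t,ω) ≠ u'(t,ω)}). -/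

import Mathlib

open MeasureTheory

/-- The central estimate in the proof of Lemma 6.5 of the paper: for `1 < τ < 2` and a
bounded coefficient `f` (`|f| ≤ K`), Lipschitz in the state variables with constant `L`,
there is a constant `C > 0` depending only on `τ, K, L` such that for any probability
space, any measurable states `x, y, x', y'` and any measurable `U`-valued controls `u, u'`,
`∫ |f(t,x,y,u) − f(t,x',y',u')|^τ dμ
   ≤ C [ d(u,u')^{1−τ/2} + ∫ (|x−x'| + |y−y'|)^τ dμ ]`,
where `μ = λ⊗P` on `[0,1] × Ω` and `d(u,u') = μ({u ≠ u'})`. -/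
theorem stmt_7 (τ K L : ℝ) (hτ1 : 1 < τ) (hτ2 : τ < 2) :
    ∃ C : ℝ, 0 < C ∧
      ∀ (Ω : Type u) [MeasurableSpace Ω] (P : Measure Ω) [IsProbabilityMeasure P]
        (μ : Measure (ℝ × Ω)), μ = (volume.restrict (Set.Icc (0 : ℝ) 1)).prod P →
      ∀ (U : Set ℝ), U.Nonempty → IsCompact U →
      ∀ f : ℝ → ℝ → ℝ → ℝ → ℝ,
        Measurable (fun q : ℝ × ℝ × ℝ × ℝ => f q.1 q.2.1 q.2.2.1 q.2.2.2) →
        (∀ t x y : ℝ, ∀ u ∈ U, |f t x y u| ≤ K) →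
        (∀ t : ℝ, ∀ u ∈ U, ∀ x y x' y' : ℝ,
          |f t x y u - f t x' y' u| ≤ L * (|x - x'| + |y - y'|)) →
      ∀ x y x' y' : ℝ × Ω → ℝ,
        Measurable x → Measurable y → Measurable x' → Measurable y' →
      ∀ u u' : ℝ × Ω → ℝ, Measurable u → Measurable u' →
        (∀ p, u p ∈ U) → (∀ p, u' p ∈ U) →
        ∫⁻ p, ENNReal.ofReal
            (|f p.1 (x p) (y p) (u p) - f p.1 (x' p) (y' p) (u' p)| ^ τ) ∂μ ≤
          ENNReal.ofReal C *
            ((μ {p | u p ≠ u' p}) ^ (1 - τ / 2) +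
              ∫⁻ p, ENNReal.ofReal ((|x p - x' p| + |y p - y' p|) ^ τ) ∂μ) := by
  have hτ0 : (0 : ℝ) < τ := by linarith
  refine ⟨(2 * |K|) ^ τ + |L| ^ τ + 1, ?_, ?_⟩
  · have h1 : (0:ℝ) ≤ (2 * |K|) ^ τ := Real.rpow_nonneg (by positivity) τ
    have h2 : (0:ℝ) ≤ |L| ^ τ := Real.rpow_nonneg (abs_nonneg L) τ
    linarith
  intro Ω _ P _ μ hμ U hUne hUcomp f hfmeas hK hL x y x' y' hx hy hx' hy' u u' hu hu' huU hu'U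
  set C : ℝ := (2 * |K|) ^ τ + |L| ^ τ + 1 with hC
  have hC1 : (2 * |K|) ^ τ ≤ C := by
    have h2 : (0:ℝ) ≤ |L| ^ τ := Real.rpow_nonneg (abs_nonneg L) τ
    simp only [hC]; linarith
  have hC2 : |L| ^ τ ≤ C := by
    have h1 : (0:ℝ) ≤ (2 * |K|) ^ τ := Real.rpow_nonneg (by positivity) τ
    simp only [hC]; linarith
  set g : ℝ × Ω → ℝ := fun p => f p.1 (x p) (y p) (u p) - f p.1 (x' p) (y' p) (u' p) with hg
  set S : Set (ℝ × Ω) := {p | u p ≠ u' p} with hS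
  have hSmeas : MeasurableSet S :=
    (measurableSet_eq_fun hu hu').compl
  -- μ is a probability measure
  haveI : IsProbabilityMeasure (volume.restrict (Set.Icc (0 : ℝ) 1)) := by
    constructor
    rw [Measure.restrict_apply_univ, Real.volume_Icc]
    norm_num
  haveI : IsProbabilityMeasure μ := by rw [hμ]; infer_instance
  have hμS1 : μ S ≤ 1 := prob_le_one
  -- bound on S
  have hbd1 : ∫⁻ p in S, ENNReal.ofReal (|g p| ^ τ) ∂μ
      ≤ ENNReal.ofReal ((2 * |K|) ^ τ) * μ S := by
    calc ∫⁻ p in S, ENNReal.ofReal (|g p| ^ τ) ∂μ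
        ≤ ∫⁻ _ in S, ENNReal.ofReal ((2 * |K|) ^ τ) ∂μ := by
          refine lintegral_mono fun p => ?_
          refine ENNReal.ofReal_le_ofReal ?_
          refine Real.rpow_le_rpow (abs_nonneg _) ?_ hτ0.le
          have h1 := hK p.1 (x p) (y p) (u p) (huU p)
          have h2 := hK p.1 (x' p) (y' p) (u' p) (hu'U p)
          have h1' : |f p.1 (x p) (y p) (u p)| ≤ |K| := h1.trans (le_abs_self K)
          have h2' : |f p.1 (x' p) (y' p) (u' p)| ≤ |K| := h2.trans (le_abs_self K)
          calc |g p| ≤ |f p.1 (x p) (y p) (u p)| + |f p.1 (x' p) (y' p) (u' p)| :=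
                abs_sub _ _
            _ ≤ 2 * |K| := by linarith
      _ = ENNReal.ofReal ((2 * |K|) ^ τ) * μ S := by
          rw [setLIntegral_const]
  have hμSpow : μ S ≤ (μ S) ^ (1 - τ / 2) := by
    calc μ S = (μ S) ^ (1 : ℝ) := (ENNReal.rpow_one _).symm
      _ ≤ (μ S) ^ (1 - τ / 2) :=
        ENNReal.rpow_le_rpow_of_exponent_ge hμS1 (by linarith)
  -- bound on Sᶜ
  have hbd2 : ∫⁻ p in Sᶜ, ENNReal.ofReal (|g p| ^ τ) ∂μ
      ≤ ENNReal.ofReal (|L| ^ τ) *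
        ∫⁻ p, ENNReal.ofReal ((|x p - x' p| + |y p - y' p|) ^ τ) ∂μ := by
    have hpt : ∀ p ∈ Sᶜ, ENNReal.ofReal (|g p| ^ τ)
        ≤ ENNReal.ofReal (|L| ^ τ) *
          ENNReal.ofReal ((|x p - x' p| + |y p - y' p|) ^ τ) := by
      intro p hp
      have heq : u p = u' p := not_not.mp hp
      have hb : (0:ℝ) ≤ |x p - x' p| + |y p - y' p| := by positivity
      have hlip : |g p| ≤ |L| * (|x p - x' p| + |y p - y' p|) := by
        have := hL p.1 (u p) (huU p) (x p) (y p) (x' p) (y' p)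
        have hLle : L * (|x p - x' p| + |y p - y' p|)
            ≤ |L| * (|x p - x' p| + |y p - y' p|) :=
          mul_le_mul_of_nonneg_right (le_abs_self L) hb
        simp only [hg, heq] at this ⊢
        linarith
      have : |g p| ^ τ ≤ (|L| * (|x p - x' p| + |y p - y' p|)) ^ τ :=
        Real.rpow_le_rpow (abs_nonneg _) hlip hτ0.le
      rw [Real.mul_rpow (abs_nonneg L) hb] at this
      rw [← ENNReal.ofReal_mul (Real.rpow_nonneg (abs_nonneg L) τ)]
      exact ENNReal.ofReal_le_ofReal this
    calc ∫⁻ p in Sᶜ, ENNReal.ofReal (|g p| ^ τ) ∂μ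
        ≤ ∫⁻ p in Sᶜ, ENNReal.ofReal (|L| ^ τ) *
            ENNReal.ofReal ((|x p - x' p| + |y p - y' p|) ^ τ) ∂μ :=
          setLIntegral_mono' hSmeas.compl hpt
      _ ≤ ∫⁻ p, ENNReal.ofReal (|L| ^ τ) *
            ENNReal.ofReal ((|x p - x' p| + |y p - y' p|) ^ τ) ∂μ :=
          setLIntegral_le_lintegral _ _
      _ = ENNReal.ofReal (|L| ^ τ) *
            ∫⁻ p, ENNReal.ofReal ((|x p - x' p| + |y p - y' p|) ^ τ) ∂μ :=
          lintegral_const_mul' _ _ ENNReal.ofReal_ne_top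
  have hsplit : ∫⁻ p, ENNReal.ofReal (|g p| ^ τ) ∂μ
      = ∫⁻ p in S, ENNReal.ofReal (|g p| ^ τ) ∂μ
        + ∫⁻ p in Sᶜ, ENNReal.ofReal (|g p| ^ τ) ∂μ :=
    (lintegral_add_compl _ hSmeas).symm
  calc ∫⁻ p, ENNReal.ofReal (|g p| ^ τ) ∂μ
      = ∫⁻ p in S, ENNReal.ofReal (|g p| ^ τ) ∂μ
        + ∫⁻ p in Sᶜ, ENNReal.ofReal (|g p| ^ τ) ∂μ := hsplit
    _ ≤ ENNReal.ofReal ((2 * |K|) ^ τ) * μ S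
        + ENNReal.ofReal (|L| ^ τ) *
          ∫⁻ p, ENNReal.ofReal ((|x p - x' p| + |y p - y' p|) ^ τ) ∂μ :=
        add_le_add hbd1 hbd2
    _ ≤ ENNReal.ofReal C * (μ S) ^ (1 - τ / 2)
        + ENNReal.ofReal C *
          ∫⁻ p, ENNReal.ofReal ((|x p - x' p| + |y p - y' p|) ^ τ) ∂μ := by
        refine add_le_add ?_ ?_
        · exact mul_le_mul (ENNReal.ofReal_le_ofReal hC1) hμSpow zero_le zero_le
        · exact mul_le_mul_left (ENNReal.ofReal_le_ofReal hC2) _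
    _ = ENNReal.ofReal C *
        ((μ S) ^ (1 - τ / 2) +
          ∫⁻ p, ENNReal.ofReal ((|x p - x' p| + |y p - y' p|) ^ τ) ∂μ) := by
        rw [mul_add]
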